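/- Fix s ≥ 1. Let 𝒜 be the free nilpotent stratified Lie algebra of step s on generators Z₁,…,Z_s, let I_i be the ideal generated by Z_i, J_i = [I_i, I_i], and J = Σᵢ J_i. Then J is an ideal of 𝒜, the quotient 𝔊 = 𝒜/J is a stratified nilpotent Lie algebra, and denoting by X₁,…,X_s the images of Z₁,…,Z_s: (a) every iterated bracket of X₁,…,X_s in which some X_i appears at least twice is zero; (b) 𝔊 has step exactly s, since [X₁,[X₂,[⋯,X_s]⋯] ≠ 0. -/

import Mathlib

/-- Formal bracket words in `s` generators. -/
inductive BW (s : ℕ) : Type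
  | leaf : Fin s → BW s
  | node : BW s → BW s → BW s

/-- Number of occurrences of the generator `i` in a bracket word. -/
def BW.count {s : ℕ} (i : Fin s) : BW s → ℕ
  | .leaf j => if i = j then 1 else 0
  | .node a b => a.count i + b.count i

/-- Evaluation of a bracket word on elements `X i` of a Lie ring. -/
def BW.eval {s : ℕ} {L : Type*} [LieRing L] (X : Fin s → L) : BW s → L
  | .leaf j => X j
  | .node a b => ⁅a.eval X, b.eval X⁆

/-- The left-nested bracket `[a₁,[a₂,[⋯,a_n]⋯]`. -/
def leftNested {L : Type*} [LieRing L] : List L → L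
  | [] => 0
  | [a] => a
  | a :: rest => ⁅a, leftNested rest⁆

/-- The free nilpotent stratified Lie algebra `𝒜` of step `s` on `s` generators,
realized as the quotient of the free Lie algebra on `Fin s` by the `s`-th term of its
lower central series (the ideal of brackets of length `> s`). -/
noncomputable abbrev Acal (s : ℕ) :=
  FreeLieAlgebra ℝ (Fin s) ⧸
    LieModule.lowerCentralSeries ℝ (FreeLieAlgebra ℝ (Fin s)) (FreeLieAlgebra ℝ (Fin s)) s

/-- The generators `Z₁,…,Z_s` of `𝒜`. -/
noncomputable abbrev Zgen (s : ℕ) (i : Fin s) : Acal s :=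
  LieSubmodule.Quotient.mk'
    (LieModule.lowerCentralSeries ℝ (FreeLieAlgebra ℝ (Fin s)) (FreeLieAlgebra ℝ (Fin s)) s)
    (FreeLieAlgebra.of ℝ i)

/-- `I_i`, the ideal of `𝒜` generated by `Z_i`. -/
noncomputable abbrev Ii (s : ℕ) (i : Fin s) : LieIdeal ℝ (Acal s) :=
  LieSubmodule.lieSpan ℝ (Acal s) {Zgen s i}

/-- `J_i = ⁅I_i, I_i⁆`. -/
noncomputable abbrev Ji (s : ℕ) (i : Fin s) : LieIdeal ℝ (Acal s) := ⁅Ii s i, Ii s i⁆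

/-- `J = Σᵢ J_i`; it is an ideal of `𝒜` (by construction, as a `LieIdeal`). -/
noncomputable abbrev Jtot (s : ℕ) : LieIdeal ℝ (Acal s) := ⨆ i, Ji s i

/-- The quotient (nilpotent, stratified) Lie algebra `𝔊 = 𝒜 / J`. -/
noncomputable abbrev Gquot (s : ℕ) := Acal s ⧸ Jtot s

/-- The images `X₁,…,X_s` of the generators `Z₁,…,Z_s` in `𝔊`. -/
noncomputable abbrev Xgen (s : ℕ) (i : Fin s) : Gquot s :=
  LieSubmodule.Quotient.mk' (Jtot s) (Zgen s i)

/-! ### Auxiliary material -/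

section QuotLift
variable {L L' : Type*} [LieRing L] [LieAlgebra ℝ L] [LieRing L'] [LieAlgebra ℝ L']

/-- The quotient map `L → L ⧸ I` as a Lie algebra homomorphism. -/
def lieMkHom (I : LieIdeal ℝ L) : L →ₗ⁅ℝ⁆ L ⧸ I :=
  { (LieSubmodule.Quotient.mk' I).toLinearMap with
    map_lie' := fun {x y} => (LieSubmodule.Quotient.mk_bracket I x y) }

@[simp] lemma lieMkHom_apply (I : LieIdeal ℝ L) (x : L) :
    lieMkHom I x = LieSubmodule.Quotient.mk' I x := rfl

/-- Lift a Lie algebra hom through a quotient by an ideal contained in its kernel. -/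
def lieQuotLift (I : LieIdeal ℝ L) (f : L →ₗ⁅ℝ⁆ L') (h : ∀ x ∈ I, f x = 0) :
    (L ⧸ I) →ₗ⁅ℝ⁆ L' :=
  { Submodule.liftQ (I : Submodule ℝ L) f.toLinearMap (fun x hx => h x hx) with
    map_lie' := by
      rintro ⟨x⟩ ⟨y⟩
      exact f.map_lie x y }

@[simp] lemma lieQuotLift_mk (I : LieIdeal ℝ L) (f : L →ₗ⁅ℝ⁆ L') (h : ∀ x ∈ I, f x = 0)
    (x : L) : lieQuotLift I f h (LieSubmodule.Quotient.mk' I x) = f x := rfl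

/-- Lie algebra homomorphisms commute with left-nested brackets. -/
lemma leftNested_map (f : L →ₗ⁅ℝ⁆ L') : ∀ l : List L,
    f (leftNested l) = leftNested (l.map f)
  | [] => by simp only [leftNested, List.map_nil, map_zero]
  | [a] => rfl
  | a :: b :: rest => by
    rw [show leftNested (a :: b :: rest) = ⁅a, leftNested (b :: rest)⁆ from rfl,
      LieHom.map_lie, leftNested_map f (b :: rest)]
    rfl

lemma leftNested_cons_ofFn (a : L) (m : ℕ) (g : Fin (m + 1) → L) :
    leftNested (a :: List.ofFn g) = ⁅a, leftNested (List.ofFn g)⁆ := by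
  rw [List.ofFn_succ]
  rfl

/-- Lie algebra homomorphisms commute with evaluation of bracket words. -/
lemma BW.eval_hom {s : ℕ} (f : L →ₗ⁅ℝ⁆ L') (X : Fin s → L) : ∀ w : BW s,
    w.eval (fun i => f (X i)) = f (w.eval X)
  | .leaf j => rfl
  | .node a b => by
    rw [BW.eval, BW.eval, BW.eval_hom f X a, BW.eval_hom f X b, LieHom.map_lie]

end QuotLift

/-- The matrix Lie algebra used as a test target. -/
abbrev MatL (s : ℕ) := Matrix (Fin (s + 1)) (Fin (s + 1)) ℝ

attribute [local instance] LieRing.ofAssociativeRing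

/-- Matrices supported at least `k` above the diagonal. -/
def Nup (s k : ℕ) : Submodule ℝ (MatL s) where
  carrier := {A | ∀ i j : Fin (s + 1), (j : ℕ) < (i : ℕ) + k → A i j = 0}
  add_mem' := fun {A B} hA hB i j h => by simp [hA i j h, hB i j h]
  zero_mem' := fun i j _ => rfl
  smul_mem' := fun c {A} hA i j h => by simp [hA i j h]

lemma Nup_mul {s k l : ℕ} {A B : MatL s} (hA : A ∈ Nup s k) (hB : B ∈ Nup s l) :
    A * B ∈ Nup s (k + l) := by
  intro i j h
  rw [Matrix.mul_apply]
  apply Finset.sum_eq_zero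
  intro m _
  rcases lt_or_ge (m : ℕ) ((i : ℕ) + k) with hm | hm
  · rw [hA i m hm, zero_mul]
  · rw [hB m j (by omega), mul_zero]

lemma Nup_lie {s k l : ℕ} {A B : MatL s} (hA : A ∈ Nup s k) (hB : B ∈ Nup s l) :
    ⁅A, B⁆ ∈ Nup s (k + l) := by
  rw [Ring.lie_def]
  exact sub_mem (Nup_mul hA hB) (by simpa [Nat.add_comm l k] using Nup_mul hB hA)

lemma Nup_mono {s k l : ℕ} (h : k ≤ l) : Nup s l ≤ Nup s k :=
  fun A hA i j hj => hA i j (by omega)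

lemma Nup_eq_zero {s : ℕ} {A : MatL s} (hA : A ∈ Nup s (s + 1)) : A = 0 := by
  ext i j
  exact hA i j (by omega)

/-- The generators: elementary superdiagonal matrices. -/
def vMat (s : ℕ) (i : Fin s) : MatL s :=
  Matrix.single i.castSucc i.succ 1

lemma vMat_mem_Nup (s : ℕ) (i : Fin s) : vMat s i ∈ Nup s 1 := by
  intro a b h
  apply Matrix.single_apply_of_ne
  rintro ⟨rfl, rfl⟩
  simp [Fin.val_succ] at h

/-- The rectangle of matrices with rows `≤ i` and columns `> i`. -/
def Rect (s : ℕ) (i : Fin s) : Submodule ℝ (MatL s) where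
  carrier := {A | ∀ a b : Fin (s + 1), ¬((a : ℕ) ≤ (i : ℕ) ∧ (i : ℕ) < (b : ℕ)) → A a b = 0}
  add_mem' := fun {A B} hA hB a b h => by simp [hA a b h, hB a b h]
  zero_mem' := fun a b _ => rfl
  smul_mem' := fun c {A} hA a b h => by simp [hA a b h]

lemma vMat_mem_Rect (s : ℕ) (i : Fin s) : vMat s i ∈ Rect s i := by
  intro a b h
  apply Matrix.single_apply_of_ne
  rintro ⟨rfl, rfl⟩
  simp [Fin.val_succ] at h

lemma Rect_lie {s : ℕ} {i : Fin s} {A B : MatL s} (hA : A ∈ Nup s 1) (hB : B ∈ Rect s i) :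
    ⁅A, B⁆ ∈ Rect s i := by
  rw [Ring.lie_def]
  refine sub_mem ?_ ?_
  · intro a b h
    rw [Matrix.mul_apply]
    apply Finset.sum_eq_zero
    intro m _
    rcases le_or_gt (m : ℕ) (a : ℕ) with hm | hm
    · rw [hA a m (by omega), zero_mul]
    · rw [hB m b (by omega), mul_zero]
  · intro a b h
    rw [Matrix.mul_apply]
    apply Finset.sum_eq_zero
    intro m _
    rcases le_or_gt (b : ℕ) (m : ℕ) with hm | hm
    · rw [hA m b (by omega), mul_zero]
    · rw [hB a m (by omega), zero_mul]

lemma Rect_lie_zero {s : ℕ} {i : Fin s} {A B : MatL s} (hA : A ∈ Rect s i) (hB : B ∈ Rect s i) :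
    ⁅A, B⁆ = 0 := by
  have key : ∀ C D : MatL s, C ∈ Rect s i → D ∈ Rect s i → C * D = 0 := by
    intro C D hC hD
    ext a b
    rw [Matrix.mul_apply]
    apply Finset.sum_eq_zero
    intro m _
    rcases le_or_gt (m : ℕ) (i : ℕ) with hm | hm
    · rw [hC a m (by omega), zero_mul]
    · rw [hD m b (by omega), mul_zero]
  rw [Ring.lie_def, key A B hA hB, key B A hB hA, sub_zero]

/-- `Nup s 1` as a Lie subalgebra. -/
def NupSub (s : ℕ) : LieSubalgebra ℝ (MatL s) :=
  { Nup s 1 with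
    lie_mem' := fun {A B} hA hB => Nup_mono (by omega) (Nup_lie hA hB) }

/-- The test homomorphism from the free Lie algebra to matrices. -/
noncomputable def phiF (s : ℕ) : FreeLieAlgebra ℝ (Fin s) →ₗ⁅ℝ⁆ MatL s :=
  FreeLieAlgebra.lift ℝ (vMat s)

lemma phiF_mem_Nup (s : ℕ) (x : FreeLieAlgebra ℝ (Fin s)) : phiF s x ∈ Nup s 1 := by
  let v' : Fin s → NupSub s := fun i => ⟨vMat s i, vMat_mem_Nup s i⟩
  have : phiF s = (NupSub s).incl.comp (FreeLieAlgebra.lift ℝ v') := by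
    rw [phiF, ← (FreeLieAlgebra.lift ℝ).apply_symm_apply ((NupSub s).incl.comp _)]
    congr 1
    ext i
    simp [FreeLieAlgebra.lift_symm_apply, v']
  rw [this]
  exact (FreeLieAlgebra.lift ℝ v' x).2

lemma phiF_lcs_mem (s k : ℕ) (x : FreeLieAlgebra ℝ (Fin s))
    (hx : x ∈ LieModule.lowerCentralSeries ℝ (FreeLieAlgebra ℝ (Fin s))
      (FreeLieAlgebra ℝ (Fin s)) k) : phiF s x ∈ Nup s (k + 1) := by
  induction k generalizing x with
  | zero => exact phiF_mem_Nup s x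
  | succ k ih =>
    rw [LieModule.lowerCentralSeries_succ] at hx
    have hx' : x ∈ (Submodule.span ℝ
        { m | ∃ y ∈ (⊤ : LieIdeal ℝ (FreeLieAlgebra ℝ (Fin s))),
            ∃ n ∈ LieModule.lowerCentralSeries ℝ (FreeLieAlgebra ℝ (Fin s))
              (FreeLieAlgebra ℝ (Fin s)) k, ⁅y, n⁆ = m }) := by
      rw [← LieSubmodule.lieIdeal_oper_eq_linear_span']
      exact hx
    refine Submodule.span_induction ?_ ?_ ?_ ?_ hx'
    · rintro m ⟨y, -, n, hn, rfl⟩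
      rw [LieHom.map_lie]
      have := Nup_lie (phiF_mem_Nup s y) (ih n hn)
      simpa [Nat.add_comm, Nat.add_left_comm] using this
    · rw [map_zero]; exact zero_mem _
    · intro a b _ _ ha hb
      rw [map_add]; exact add_mem ha hb
    · intro c a _ ha
      rw [map_smul]; exact Submodule.smul_mem _ c ha

lemma phiF_lcs_zero (s : ℕ) (x : FreeLieAlgebra ℝ (Fin s))
    (hx : x ∈ LieModule.lowerCentralSeries ℝ (FreeLieAlgebra ℝ (Fin s))
      (FreeLieAlgebra ℝ (Fin s)) s) : phiF s x = 0 :=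
  Nup_eq_zero (phiF_lcs_mem s s x hx)

/-- The induced homomorphism `𝒜 → MatL`. -/
noncomputable def psi1 (s : ℕ) : Acal s →ₗ⁅ℝ⁆ MatL s :=
  lieQuotLift _ (phiF s) (phiF_lcs_zero s)

lemma psi1_Z (s : ℕ) (i : Fin s) : psi1 s (Zgen s i) = vMat s i := by
  show phiF s (FreeLieAlgebra.of ℝ i) = vMat s i
  exact FreeLieAlgebra.lift_of_apply (vMat s) i

lemma psi1_mem_Nup (s : ℕ) (y : Acal s) : psi1 s y ∈ Nup s 1 := by
  obtain ⟨x, rfl⟩ := LieSubmodule.Quotient.surjective_mk' _ y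
  exact phiF_mem_Nup s x

/-- The pullback of the rectangle `Rect s i` is a Lie ideal of `𝒜`. -/
noncomputable def Qideal (s : ℕ) (i : Fin s) : LieIdeal ℝ (Acal s) :=
  { (Rect s i).comap (psi1 s).toLinearMap with
    lie_mem := fun {x m} hm => by
      show psi1 s ⁅x, m⁆ ∈ Rect s i
      rw [LieHom.map_lie]
      exact Rect_lie (psi1_mem_Nup s x) hm }

lemma Ii_le_Q (s : ℕ) (i : Fin s) : Ii s i ≤ Qideal s i := by
  rw [LieSubmodule.lieSpan_le]
  intro x hx
  rw [Set.mem_singleton_iff] at hx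
  subst hx
  show psi1 s (Zgen s i) ∈ Rect s i
  rw [psi1_Z]
  exact vMat_mem_Rect s i

lemma Jtot_psi1 (s : ℕ) : ∀ x ∈ Jtot s, psi1 s x = 0 := by
  have h : Jtot s ≤ (psi1 s).ker := by
    apply iSup_le
    intro i
    rw [LieSubmodule.lie_le_iff]
    intro x hx m hm
    rw [LieHom.mem_ker, LieHom.map_lie]
    exact Rect_lie_zero (Ii_le_Q s i hx) (Ii_le_Q s i hm)
  intro x hx
  exact LieHom.mem_ker.mp (h hx)

/-- The induced homomorphism `𝔊 → MatL`. -/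
noncomputable def psi2 (s : ℕ) : Gquot s →ₗ⁅ℝ⁆ MatL s :=
  lieQuotLift (Jtot s) (psi1 s) (Jtot_psi1 s)

lemma psi2_X (s : ℕ) (i : Fin s) : psi2 s (Xgen s i) = vMat s i := psi1_Z s i

lemma stdBasis_congr {n : ℕ} {a a' b b' : Fin n} (ha : a = a') (hb : b = b') :
    (Matrix.single a b (1 : ℝ)) = Matrix.single a' b' 1 := by
  rw [ha, hb]

/-- The left-nested bracket of a tail chain of superdiagonal matrices. -/
lemma vMat_chain (s : ℕ) : ∀ n : ℕ, 1 ≤ n → ∀ hns : n ≤ s,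
    leftNested (List.ofFn (fun j : Fin n =>
        vMat s ⟨s - n + (j : ℕ), by have := j.isLt; omega⟩)) =
      Matrix.single ⟨s - n, by omega⟩ (Fin.last s) 1 := by
  intro n
  induction n with
  | zero => omega
  | succ m ih =>
    intro _ hns
    cases m with
    | zero =>
      show leftNested [vMat s ⟨s - 1 + ((0 : Fin 1) : ℕ), _⟩] = _
      show vMat s ⟨s - 1 + ((0 : Fin 1) : ℕ), _⟩ = _
      rw [vMat]
      exact stdBasis_congr
        (Fin.ext (by simp only [Fin.coe_castSucc]; omega))
        (Fin.ext (by simp only [Fin.val_succ, Fin.val_last]; omega))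
    | succ k =>
      rw [List.ofFn_succ, leftNested_cons_ofFn]
      have htail : (fun j : Fin (k + 1) =>
          vMat s ⟨s - (k + 2) + ((j.succ : Fin (k + 2)) : ℕ), by have := j.isLt; omega⟩) =
          (fun j : Fin (k + 1) =>
            vMat s ⟨s - (k + 1) + (j : ℕ), by have := j.isLt; omega⟩) := by
        funext j
        exact congrArg (vMat s) (Fin.ext (by simp only [Fin.val_succ]; omega))
      rw [htail, ih (by omega) (by omega)]
      have h0 : vMat s ⟨s - (k + 2) + (((0 : Fin (k + 2))) : ℕ), by omega⟩ =
          Matrix.single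
            (⟨s - (k + 2), by omega⟩ : Fin (s + 1)) (⟨s - (k + 1), by omega⟩ : Fin (s + 1)) 1 := by
        rw [vMat]
        exact stdBasis_congr
          (Fin.ext (by simp only [Fin.coe_castSucc, Fin.val_zero]; omega))
          (Fin.ext (by simp only [Fin.val_succ, Fin.val_zero]; omega))
      rw [h0, Ring.lie_def, Matrix.single_mul_single_same,
        Matrix.single_mul_single_of_ne, sub_zero, one_mul]
      exact Fin.ne_of_val_ne (by simp [Fin.val_last]; omega)

lemma vMat_leftNested (s : ℕ) (hs : 1 ≤ s) :
    leftNested (List.ofFn (vMat s)) =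
      Matrix.single (⟨0, by omega⟩ : Fin (s + 1)) (Fin.last s) 1 := by
  have := vMat_chain s s hs le_rfl
  have hfun : (fun j : Fin s => vMat s ⟨s - s + (j : ℕ), by have := j.isLt; omega⟩) = vMat s := by
    funext j
    exact congrArg (vMat s) (Fin.ext (by simp))
  rw [hfun] at this
  rw [this]
  exact stdBasis_congr (Fin.ext (by simp)) rfl

/-! ### Membership lemmas for bracket words -/

lemma eval_mem_Ii (s : ℕ) (i : Fin s) : ∀ w : BW s, 1 ≤ w.count i →
    w.eval (Zgen s) ∈ Ii s i := by
  intro w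
  induction w with
  | leaf j =>
    intro h
    rw [BW.count] at h
    split at h
    · next hij =>
      subst hij
      exact LieSubmodule.subset_lieSpan rfl
    · omega
  | node a b iha ihb =>
    intro h
    rw [BW.count] at h
    rw [BW.eval]
    rcases Nat.lt_or_ge 0 (a.count i) with ha | ha
    · rw [← lie_skew]
      exact neg_mem ((Ii s i).lie_mem (iha ha))
    · exact (Ii s i).lie_mem (ihb (by omega))

lemma eval_mem_Ji (s : ℕ) (i : Fin s) : ∀ w : BW s, 2 ≤ w.count i →
    w.eval (Zgen s) ∈ Ji s i := by
  intro w
  induction w with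
  | leaf j =>
    intro h
    rw [BW.count] at h
    split at h <;> omega
  | node a b iha ihb =>
    intro h
    rw [BW.count] at h
    rw [BW.eval]
    rcases Nat.lt_or_ge 0 (a.count i) with ha | ha
    · rcases Nat.lt_or_ge 0 (b.count i) with hb | hb
      · exact LieSubmodule.lie_mem_lie (eval_mem_Ii s i a ha) (eval_mem_Ii s i b hb)
      · rw [← lie_skew]
        exact neg_mem ((Ji s i).lie_mem (iha (by omega)))
    · exact (Ji s i).lie_mem (ihb (by omega))

theorem free_quotient_step_s
    (s : ℕ) (hs : 1 ≤ s) :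
    (∀ w : BW s, (∃ i : Fin s, 2 ≤ w.count i) → w.eval (Xgen s) = 0) ∧
    leftNested (List.ofFn (Xgen s)) ≠ 0 ∧
    LieModule.lowerCentralSeries ℝ (Gquot s) (Gquot s) s = ⊥ := by
  refine ⟨?_, ?_, ?_⟩
  · rintro w ⟨i, hi⟩
    have heval : w.eval (Xgen s) = lieMkHom (Jtot s) (w.eval (Zgen s)) :=
      BW.eval_hom (lieMkHom (Jtot s)) (Zgen s) w
    rw [heval, lieMkHom_apply, LieSubmodule.Quotient.mk_eq_zero]
    exact le_iSup (fun i => Ji s i) i (eval_mem_Ji s i w hi)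
  · intro h0
    have hmap := leftNested_map (psi2 s) (List.ofFn (Xgen s))
    rw [h0, map_zero, List.map_ofFn] at hmap
    have hcomp : (psi2 s) ∘ (Xgen s) = vMat s := funext fun i => psi2_X s i
    rw [hcomp, vMat_leftNested s hs] at hmap
    have := congrFun (congrFun hmap ⟨0, by omega⟩) (Fin.last s)
    rw [Matrix.single_apply_same] at this
    simp at this
  · set K := LieModule.lowerCentralSeries ℝ (FreeLieAlgebra ℝ (Fin s))
      (FreeLieAlgebra ℝ (Fin s)) s with hK
    let π : FreeLieAlgebra ℝ (Fin s) →ₗ⁅ℝ⁆ Gquot s :=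
      (lieMkHom (Jtot s)).comp (lieMkHom K)
    have hsurj : Function.Surjective π :=
      (LieSubmodule.Quotient.surjective_mk' (Jtot s)).comp
        (LieSubmodule.Quotient.surjective_mk' K)
    rw [← LieIdeal.lowerCentralSeries_map_eq (f := π) s hsurj]
    rw [eq_bot_iff]
    rw [LieIdeal.map_le_iff_le_comap]
    intro x hx
    rw [LieIdeal.mem_comap]
    have : π x = 0 := by
      show lieMkHom (Jtot s) (lieMkHom K x) = 0
      have hx0 : lieMkHom K x = 0 := by
        rw [lieMkHom_apply, LieSubmodule.Quotient.mk_eq_zero]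
        exact hx
      rw [hx0, map_zero]
    rw [this]
    exact (⊥ : LieIdeal ℝ (Gquot s)).zero_mem
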